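/- A point of the 10-dimensional reduced Wendling–Chauvel system is an equilibrium if and only if Y₅ = Y₆ = Y₇ = Y₈ = Y₉ = 0 and there exists X ∈ ℝ with Y₀ = jS(X), Y₂ = (jG₁α₄/d₁) S(α₃ jS(X)), Z = α₅ jS(X) - (jG₁α₆/d₁) S(α₃ jS(X)), Y₃ = (jG₂α₇/d₂) S(Z), and P = X + Y₂ + Y₃ - α₂ j S(α₁ j S(X)). -/

import Mathlib

/-- Equilibria of the reduced 10-dimensional Wendling–Chauvel system are exactly
    the points with Y₅ = ⋯ = Y₉ = 0 parametrized by X via the stated relations. -/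
theorem wendling_chauvel_equilibria
    (j P d₁ d₂ G₁ G₂ α₁ α₂ α₃ α₄ α₅ α₆ α₇ k₀ : ℝ)
    (hj : 0 < j) (hd₁ : 0 < d₁) (hd₂ : 0 < d₂) (hG₁ : 0 < G₁) (hG₂ : 0 < G₂)
    (h1 : 0 < α₁) (h2 : 0 < α₂) (h3 : 0 < α₃) (h4 : 0 < α₄)
    (h5 : 0 < α₅) (h6 : 0 < α₆) (h7 : 0 < α₇) (hk : 0 < k₀)
    (S : ℝ → ℝ) (hS : ∀ x, S x = 1 / (1 + k₀ * Real.exp (-x)))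
    (Y₀ X Y₂ Y₃ Z Y₅ Y₆ Y₇ Y₈ Y₉ : ℝ) :
    (Y₅ = 0 ∧
     Y₆ - Y₇ - Y₈ = 0 ∧
     Y₇ = 0 ∧
     Y₈ = 0 ∧
     α₅ * Y₅ - α₆ * Y₉ = 0 ∧
     j * S X - 2 * Y₅ - Y₀ = 0 ∧
     j * α₂ * S (α₁ * Y₀) - 2 * Y₆ - (X + Y₂ + Y₃) + P = 0 ∧
     j * d₁ * G₁ * α₄ * S (α₃ * Y₀) - 2 * d₁ * Y₇ - d₁ ^ 2 * Y₂ = 0 ∧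
     j * d₂ * G₂ * α₇ * S Z - 2 * d₂ * Y₈ - d₂ ^ 2 * Y₃ = 0 ∧
     j * d₁ * G₁ * S (α₃ * Y₀) - 2 * d₁ * Y₉ - d₁ ^ 2 * (α₅ * Y₀ - Z) / α₆ = 0)
    ↔
    (Y₅ = 0 ∧ Y₆ = 0 ∧ Y₇ = 0 ∧ Y₈ = 0 ∧ Y₉ = 0 ∧
     Y₀ = j * S X ∧
     Y₂ = j * G₁ * α₄ / d₁ * S (α₃ * (j * S X)) ∧
     Z = α₅ * (j * S X) - j * G₁ * α₆ / d₁ * S (α₃ * (j * S X)) ∧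
     Y₃ = j * G₂ * α₇ / d₂ * S Z ∧
     P = X + Y₂ + Y₃ - α₂ * j * S (α₁ * (j * S X))) := by
  have hd₁' : d₁ ≠ 0 := hd₁.ne'
  have hd₂' : d₂ ≠ 0 := hd₂.ne'
  have h6' : α₆ ≠ 0 := h6.ne'
  constructor
  · rintro ⟨h₅, h₆₇₈, h₇, h₈, h₉, e0, e1, e2, e3, e4⟩
    subst h₅; subst h₇; subst h₈
    have hY6 : Y₆ = 0 := by linarith
    have hY9 : Y₉ = 0 := by
      have h : α₆ * Y₉ = 0 := by linarith
      rcases mul_eq_zero.1 h with h | h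
      · exact absurd h h6'
      · exact h
    subst hY9
    have hY0 : Y₀ = j * S X := by linarith
    subst hY0
    field_simp at e4
    have hY2 : Y₂ = j * G₁ * α₄ / d₁ * S (α₃ * (j * S X)) := by
      have h : Y₂ = j * d₁ * G₁ * α₄ * S (α₃ * (j * S X)) / d₁ ^ 2 := by
        rw [eq_div_iff (pow_ne_zero 2 hd₁')]; linear_combination -e2
      rw [h]; field_simp <;> ring
    have hZ : Z = α₅ * (j * S X) - j * G₁ * α₆ / d₁ * S (α₃ * (j * S X)) := by
      have h : Z = (d₁ ^ 2 * (α₅ * (j * S X)) - j * d₁ * G₁ * S (α₃ * (j * S X)) * α₆) / d₁ ^ 2 := by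
        rw [eq_div_iff (pow_ne_zero 2 hd₁')]; rw [show j * α₃ * S X = α₃ * (j * S X) by ring] at e4; linear_combination e4
      rw [h]; field_simp <;> ring
    have hY3 : Y₃ = j * G₂ * α₇ / d₂ * S Z := by
      have h : Y₃ = j * d₂ * G₂ * α₇ * S Z / d₂ ^ 2 := by
        rw [eq_div_iff (pow_ne_zero 2 hd₂')]; linear_combination -e3
      rw [h]; field_simp <;> ring
    refine ⟨rfl, hY6, rfl, rfl, rfl, rfl, hY2, hZ, hY3, by linarith⟩
  · rintro ⟨h₅, h₆, h₇, h₈, h₉, hY0, hY2, hZ, hY3, hP⟩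
    subst h₅; subst h₆; subst h₇; subst h₈; subst h₉; subst hY0
    refine ⟨rfl, by ring, rfl, rfl, by ring, by ring, by rw [hP]; ring, ?_, ?_, ?_⟩
    · rw [hY2]; field_simp; ring
    · rw [hY3]; field_simp; ring
    · rw [hZ]; field_simp; ring
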